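/- Let n ≥ 3 and let α ∈ ℂ with |α| = 1 and α ∉ ℝ. Let A be the n×n Hermitian matrix of the n-cycle with A_{j,j+1} = A_{j+1,j} = 1 for 1 ≤ j ≤ n−1, A_{1,n} = α, A_{n,1} = conj(α), and all other entries 0. Then every eigenvalue of A lies in the open interval (−2, 2); in particular the span of A is less than 4. -/

import Mathlib

open Complex Finset Matrix

lemma sum_two_aux {N : ℕ} (f : Fin N → ℂ) (a b : Fin N) (ca cb : ℂ)
    (hf : ∀ j, f j = (if j = a then ca else 0) + (if j = b then cb else 0)) :
    ∑ j, f j = ca + cb := by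
  simp only [hf, Finset.sum_add_distrib, Finset.sum_ite_eq', Finset.mem_univ, if_true]

lemma key_lemma (m : ℕ) (α : ℂ) (hα1 : (starRingEnd ℂ) α * α = 1) (hα2 : α ≠ 1)
    (lam : ℝ) (u : ℕ → ℂ)
    (H0 : α * u (m + 2) + u 1 = (lam : ℂ) * u 0)
    (Hmid : ∀ k, k ≤ m → u k + u (k + 2) = (lam : ℂ) * u (k + 1))
    (Hn : (starRingEnd ℂ) α * u 0 + u (m + 1) = (lam : ℂ) * u (m + 2))
    (hP : 0 < ∑ k ∈ range (m + 3), Complex.normSq (u k)) :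
    lam < 2 := by
  set C := starRingEnd ℂ with hC
  set P : ℝ := ∑ k ∈ range (m + 3), Complex.normSq (u k) with hPdef
  have lamP : (lam : ℂ) * ∑ k ∈ range (m + 3), C (u k) * u k
      = (∑ k ∈ range (m + 2), (C (u (k + 1)) * u k + C (u k) * u (k + 1)))
        + (C (u 0) * (α * u (m + 2)) + C (u (m + 2)) * (C α * u 0)) := by
    have e1 : (lam : ℂ) * ∑ k ∈ range (m + 3), C (u k) * u k
        = ∑ k ∈ range (m + 3), C (u k) * ((lam : ℂ) * u k) := by
      rw [Finset.mul_sum]; apply Finset.sum_congr rfl; intros; ring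
    rw [e1, Finset.sum_range_succ, Finset.sum_range_succ']
    rw [← Hn, ← H0]
    have e2 : ∀ k ∈ range (m + 1), C (u (k + 1)) * ((lam : ℂ) * u (k + 1))
        = C (u (k + 1)) * (u k + u (k + 2)) := by
      intro k hk
      rw [← Hmid k (by simpa using Nat.lt_succ_iff.mp (Finset.mem_range.mp hk))]
    rw [Finset.sum_congr rfl e2]
    have e3 : ∑ k ∈ range (m + 2), C (u (k + 1)) * u k
        = (∑ k ∈ range (m + 1), C (u (k + 1)) * u k) + C (u (m + 2)) * u (m + 1) :=
      Finset.sum_range_succ _ _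
    have e4 : ∑ k ∈ range (m + 2), C (u k) * u (k + 1)
        = (∑ k ∈ range (m + 1), C (u (k + 1)) * u (k + 2)) + C (u 0) * u 1 :=
      Finset.sum_range_succ' _ _
    simp only [mul_add, Finset.sum_add_distrib]
    rw [e3, e4]
    ring
  have keyC : (∑ k ∈ range (m + 2), C (u (k + 1) - u k) * (u (k + 1) - u k))
      + C (u 0 - α * u (m + 2)) * (u 0 - α * u (m + 2))
      = (2 - (lam : ℂ)) * ∑ k ∈ range (m + 3), C (u k) * u k := by
    have expand : ∀ k ∈ range (m + 2), C (u (k + 1) - u k) * (u (k + 1) - u k)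
        = (C (u (k + 1)) * u (k + 1) + C (u k) * u k)
          - (C (u (k + 1)) * u k + C (u k) * u (k + 1)) := by
      intro k _; simp only [map_sub]; ring
    rw [Finset.sum_congr rfl expand, Finset.sum_sub_distrib, Finset.sum_add_distrib]
    have e5 : ∑ k ∈ range (m + 2), C (u (k + 1)) * u (k + 1)
        = (∑ k ∈ range (m + 3), C (u k) * u k) - C (u 0) * u 0 := by
      rw [Finset.sum_range_succ' (fun k => C (u k) * u k) (m + 2)]; ring
    have e6 : ∑ k ∈ range (m + 2), C (u k) * u k
        = (∑ k ∈ range (m + 3), C (u k) * u k) - C (u (m + 2)) * u (m + 2) := by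
      rw [Finset.sum_range_succ (fun k => C (u k) * u k) (m + 2)]; ring
    rw [e5, e6]
    have e7 : C (u 0 - α * u (m + 2)) * (u 0 - α * u (m + 2))
        = C (u 0) * u 0 + C (u (m + 2)) * u (m + 2)
          - (C (u 0) * (α * u (m + 2)) + C (u (m + 2)) * (C α * u 0)) := by
      simp only [map_sub, _root_.map_mul]
      have h1 : C α * α = 1 := hα1
      linear_combination (C (u (m + 2)) * u (m + 2)) * h1
    rw [e7]
    linear_combination lamP
  have hre : ∀ z : ℂ, C z * z = (Complex.normSq z : ℂ) := by
    intro z; rw [hC, mul_comm, Complex.mul_conj]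
  have keyR : (∑ k ∈ range (m + 2), Complex.normSq (u (k + 1) - u k))
      + Complex.normSq (u 0 - α * u (m + 2)) = (2 - lam) * P := by
    have h := keyC
    simp only [hre] at h
    exact_mod_cast h
  by_contra hcon
  push_neg at hcon
  have hS0 : (∑ k ∈ range (m + 2), Complex.normSq (u (k + 1) - u k))
      + Complex.normSq (u 0 - α * u (m + 2)) ≤ 0 := by
    rw [keyR]; nlinarith
  have h1 : (0:ℝ) ≤ ∑ k ∈ range (m + 2), Complex.normSq (u (k + 1) - u k) :=
    Finset.sum_nonneg fun k _ => Complex.normSq_nonneg _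
  have hsum0 : ∑ k ∈ range (m + 2), Complex.normSq (u (k + 1) - u k) = 0 := by
    nlinarith [Complex.normSq_nonneg (u 0 - α * u (m + 2))]
  have he0 : Complex.normSq (u 0 - α * u (m + 2)) = 0 := by
    nlinarith [Complex.normSq_nonneg (u 0 - α * u (m + 2))]
  have hstep : ∀ k, k < m + 2 → u (k + 1) = u k := by
    intro k hk
    have h2 := (Finset.sum_eq_zero_iff_of_nonneg
      (fun k _ => Complex.normSq_nonneg (u (k + 1) - u k))).mp hsum0 k (Finset.mem_range.mpr hk)
    exact sub_eq_zero.mp (Complex.normSq_eq_zero.mp h2)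
  have hconst : ∀ k, k ≤ m + 2 → u k = u 0 := by
    intro k hk
    induction k with
    | zero => rfl
    | succ k ih => rw [hstep k (by omega), ih (by omega)]
  have hu0 : u 0 = 0 := by
    have he : u 0 = α * u (m + 2) := sub_eq_zero.mp (Complex.normSq_eq_zero.mp he0)
    rw [hconst (m + 2) le_rfl] at he
    have hz : (1 - α) * u 0 = 0 := by linear_combination he
    rcases mul_eq_zero.mp hz with h | h
    · exact absurd (by linear_combination -h) hα2
    · exact h
  have hPz : P = 0 := by
    rw [hPdef]
    apply Finset.sum_eq_zero
    intro k hk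
    rw [hconst k (by have := Finset.mem_range.mp hk; omega), hu0]
    simp
  rw [hPz] at hP
  exact lt_irrefl 0 hP


/-- the template 𝒬ₙ (uncharged n-cycle with one edge-weight α,
|α| = 1, α irrational/non-real, and all other edge-weights 1) has all eigenvalues
in the open interval (-2, 2); in particular it has span less than 4. -/
theorem stmt_9 (n : ℕ) (hn : 3 ≤ n) (α : ℂ) (hα : ‖α‖ = 1)
    (hαnr : α.im ≠ 0)
    (A : Matrix (Fin n) (Fin n) ℂ)
    (hAdef : ∀ i j : Fin n, A i j =
      if (i : ℕ) = 0 ∧ (j : ℕ) = n - 1 then α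
      else if (i : ℕ) = n - 1 ∧ (j : ℕ) = 0 then starRingEnd ℂ α
      else if (j : ℕ) = (i : ℕ) + 1 then 1
      else if (i : ℕ) = (j : ℕ) + 1 then 1
      else 0)
    (hA : A.IsHermitian) :
    (∀ i, hA.eigenvalues i ∈ Set.Ioo (-2 : ℝ) 2) ∧
    (∀ i j, hA.eigenvalues i - hA.eigenvalues j < 4) := by
  obtain ⟨m, rfl⟩ : ∃ m, n = m + 3 := ⟨n - 3, by omega⟩
  have hα1 : (starRingEnd ℂ) α * α = 1 := by
    rw [mul_comm, Complex.mul_conj]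
    rw [Complex.normSq_eq_norm_sq, hα]
    norm_num
  have hα2 : α ≠ 1 := by
    intro h; apply hαnr; rw [h]; rfl
  have main : ∀ i, hA.eigenvalues i ∈ Set.Ioo (-2 : ℝ) 2 := by
    intro i
    set lam := hA.eigenvalues i with hlam
    set v : Fin (m + 3) → ℂ := ⇑(hA.eigenvectorBasis i) with hv
    have hAv : A *ᵥ v = lam • v := hA.mulVec_eigenvectorBasis i
    have hpoint : ∀ j : Fin (m + 3), ∑ x, A j x * v x = (lam : ℂ) * v j := by
      intro j
      have h := congrFun hAv j
      simpa [Matrix.mulVec, dotProduct, Complex.real_smul] using h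
    -- the vector as a function on ℕ
    set u : ℕ → ℂ := fun k => if h : k < m + 3 then v ⟨k, h⟩ else 0 with hudef
    have hu : ∀ (k : ℕ) (h : k < m + 3), u k = v ⟨k, h⟩ := fun k h => dif_pos h
    -- row computations
    have row0 : ∀ j : Fin (m+3), A ⟨0, by omega⟩ j * v j =
        (if j = (⟨m+2, by omega⟩ : Fin (m+3)) then α * v ⟨m+2, by omega⟩ else 0)
        + (if j = (⟨1, by omega⟩ : Fin (m+3)) then v ⟨1, by omega⟩ else 0) := by
      rintro ⟨jv, hj⟩
      rw [hAdef]
      by_cases h2 : jv = m + 2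
      · subst h2
        simp [Fin.ext_iff]
      · by_cases h1 : jv = 1
        · subst h1
          simp [Fin.ext_iff, show (1:ℕ) ≠ m + 2 by omega]
        · simp [Fin.ext_iff, h1, h2, show jv ≠ m + 3 - 1 by omega]
    have rowend : ∀ j : Fin (m+3), A ⟨m+2, by omega⟩ j * v j =
        (if j = (⟨0, by omega⟩ : Fin (m+3)) then (starRingEnd ℂ) α * v ⟨0, by omega⟩ else 0)
        + (if j = (⟨m+1, by omega⟩ : Fin (m+3)) then v ⟨m+1, by omega⟩ else 0) := by
      rintro ⟨jv, hj⟩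
      rw [hAdef]
      by_cases h2 : jv = 0
      · subst h2
        simp [Fin.ext_iff, show m + 3 - 1 = m + 2 from rfl]
      · by_cases h1 : jv = m + 1
        · subst h1
          simp [Fin.ext_iff, show m + 1 ≠ m + 3 by omega, show m + 1 ≠ 0 by omega,
            show m + 3 - 1 = m + 2 from rfl]
        · simp [Fin.ext_iff, h1, h2, show jv ≠ m + 2 + 1 by omega,
            show m + 2 ≠ jv + 1 by omega, show m + 3 - 1 = m + 2 from rfl]
    have rowmid : ∀ (k : ℕ) (hk : k ≤ m), ∀ j : Fin (m+3), A ⟨k+1, by omega⟩ j * v j =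
        (if j = (⟨k, by omega⟩ : Fin (m+3)) then v ⟨k, by omega⟩ else 0)
        + (if j = (⟨k+2, by omega⟩ : Fin (m+3)) then v ⟨k+2, by omega⟩ else 0) := by
      rintro k hk ⟨jv, hj⟩
      rw [hAdef]
      by_cases h2 : jv = k
      · simp [Fin.ext_iff, h2, show k ≠ m + 1 by omega, show k ≠ k + 2 by omega,
          show k ≠ k + 1 + 1 by omega]
      · by_cases h1 : jv = k + 2
        · simp [Fin.ext_iff, h1, show k ≠ m + 1 by omega, show k + 2 ≠ k by omega]
        · simp [Fin.ext_iff, h1, h2, show k ≠ m + 1 by omega, Ne.symm h2,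
            show jv ≠ k + 1 + 1 by omega]
    -- eigen-equations in terms of u
    have H0 : α * u (m + 2) + u 1 = (lam : ℂ) * u 0 := by
      have h := hpoint ⟨0, by omega⟩
      rw [sum_two_aux _ _ _ _ _ row0] at h
      rw [hu (m+2) (by omega), hu 1 (by omega), hu 0 (by omega)]
      exact h
    have Hn : (starRingEnd ℂ) α * u 0 + u (m + 1) = (lam : ℂ) * u (m + 2) := by
      have h := hpoint ⟨m+2, by omega⟩
      rw [sum_two_aux _ _ _ _ _ rowend] at h
      rw [hu (m+1) (by omega), hu 0 (by omega), hu (m+2) (by omega)]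
      exact h
    have Hmid : ∀ k, k ≤ m → u k + u (k + 2) = (lam : ℂ) * u (k + 1) := by
      intro k hk
      have h := hpoint ⟨k+1, by omega⟩
      rw [sum_two_aux _ _ _ _ _ (rowmid k hk)] at h
      rw [hu k (by omega), hu (k+2) (by omega), hu (k+1) (by omega)]
      exact h
    -- positivity of the norm
    have hvnz : ∃ j, v j ≠ 0 := by
      by_contra hcon
      push_neg at hcon
      have : hA.eigenvectorBasis i = 0 := by
        ext j
        exact hcon j
      exact hA.eigenvectorBasis.orthonormal.ne_zero i this
    have hP : 0 < ∑ k ∈ range (m + 3), Complex.normSq (u k) := by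
      rw [← Fin.sum_univ_eq_sum_range (fun k => Complex.normSq (u k)) (m+3)]
      obtain ⟨j, hj⟩ := hvnz
      apply Finset.sum_pos' (fun k _ => Complex.normSq_nonneg _)
      refine ⟨j, Finset.mem_univ _, ?_⟩
      rw [hu j.1 j.2]
      simp only [Fin.eta]
      exact Complex.normSq_pos.mpr hj
    -- upper bound
    have hupper : lam < 2 := key_lemma m α hα1 hα2 lam u H0 Hmid Hn hP
    -- lower bound via sign flip
    have hlower : -lam < 2 := by
      set s : ℂ := (-1 : ℂ) ^ m with hs
      have hss : s * s = 1 := by rw [hs, ← mul_pow]; norm_num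
      set α' : ℂ := (-1 : ℂ) ^ (m + 3) * α with hα'
      set u' : ℕ → ℂ := fun k => (-1 : ℂ) ^ k * u k with hu'
      have hCα' : (starRingEnd ℂ) α' = (-1 : ℂ) ^ (m + 3) * (starRingEnd ℂ) α := by
        simp [hα', _root_.map_mul, _root_.map_pow]
      have hα1' : (starRingEnd ℂ) α' * α' = 1 := by
        rw [hCα', hα']
        have : ((-1 : ℂ) ^ (m + 3)) * ((-1 : ℂ) ^ (m + 3)) = 1 := by
          rw [← mul_pow]; norm_num
        linear_combination ((starRingEnd ℂ) α * α) * this + hα1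
      have hα2' : α' ≠ 1 := by
        intro h
        apply hαnr
        have him := congrArg Complex.im h
        rw [hα'] at him
        rcases Nat.even_or_odd (m + 3) with he | ho
        · rw [he.neg_one_pow, one_mul] at him
          simpa using him
        · rw [ho.neg_one_pow] at him
          simp at him
          simpa using him
      have H0' : α' * u' (m + 2) + u' 1 = ((-lam : ℝ) : ℂ) * u' 0 := by
        rw [hα', hu']
        push_cast
        linear_combination (-1 : ℂ) * H0 - α * u (m + 2) * hss
      have Hn' : (starRingEnd ℂ) α' * u' 0 + u' (m + 1) = ((-lam : ℝ) : ℂ) * u' (m + 2) := by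
        rw [hCα', hu']
        push_cast
        linear_combination (-s) * Hn
      have Hmid' : ∀ k, k ≤ m → u' k + u' (k + 2) = ((-lam : ℝ) : ℂ) * u' (k + 1) := by
        intro k hk
        rw [hu']
        push_cast
        linear_combination ((-1 : ℂ) ^ k) * Hmid k hk
      have hP' : 0 < ∑ k ∈ range (m + 3), Complex.normSq (u' k) := by
        have : ∀ k ∈ range (m + 3), Complex.normSq (u' k) = Complex.normSq (u k) := by
          intro k _
          rw [hu']
          simp [Complex.normSq_mul, _root_.map_pow]
        rw [Finset.sum_congr rfl this]
        exact hP
      exact key_lemma m α' hα1' hα2' (-lam) u' H0' Hmid' Hn' hP'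
    constructor <;> [linarith; exact hupper]
  refine ⟨main, ?_⟩
  intro i j
  have h1 := (main i).2
  have h2 := (main j).1
  linarith
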